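/- Let ψ(U) = (3/2)‖U‖_F⁴ + c‖U‖_F² with c ≥ 0, λ ≥ 0, η > 0, and let h: R^{m×r} → R be given by h(U) = (λ/2)‖U‖_F² + ⟨g, U⟩ + (1/η)D_ψ(U, V) for fixed g, V ∈ R^{m×r}. Then U is a minimizer of h if and only if (λη + 6‖U‖_F² + 2c) U = ∇ψ(V) − η g. -/

import Mathlib

open Matrix

noncomputable def finner {m r : ℕ} (A B : Matrix (Fin m) (Fin r) ℝ) : ℝ :=
  Matrix.trace (Aᵀ * B)

/-- The gradient of `ψ(U) = (3/2)‖U‖⁴ + c‖U‖²` (Frobenius norm). -/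
noncomputable def gradPsi {m r : ℕ} (c : ℝ) (V : Matrix (Fin m) (Fin r) ℝ) :
    Matrix (Fin m) (Fin r) ℝ :=
  (6 * finner V V) • V + (2 * c) • V

/-- Bregman distance generated by `ψ`. -/
noncomputable def Dpsi {m r : ℕ} (c : ℝ) (U V : Matrix (Fin m) (Fin r) ℝ) : ℝ :=
  ((3/2) * (finner U U) ^ 2 + c * finner U U)
    - ((3/2) * (finner V V) ^ 2 + c * finner V V)
    - finner (gradPsi c V) (U - V)

lemma finner_expand {m r : ℕ} (A B : Matrix (Fin m) (Fin r) ℝ) :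
    finner A B = ∑ j, ∑ i, A i j * B i j := by
  simp [finner, Matrix.trace, Matrix.mul_apply, Matrix.diag]

lemma finner_comm {m r : ℕ} (A B : Matrix (Fin m) (Fin r) ℝ) :
    finner A B = finner B A := by
  simp [finner_expand, mul_comm]

lemma finner_add_left {m r : ℕ} (A B C : Matrix (Fin m) (Fin r) ℝ) :
    finner (A + B) C = finner A C + finner B C := by
  simp [finner_expand, add_mul, Finset.sum_add_distrib]

lemma finner_add_right {m r : ℕ} (A B C : Matrix (Fin m) (Fin r) ℝ) :
    finner A (B + C) = finner A B + finner A C := by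
  simp [finner_expand, mul_add, Finset.sum_add_distrib]

lemma finner_smul_left {m r : ℕ} (s : ℝ) (A B : Matrix (Fin m) (Fin r) ℝ) :
    finner (s • A) B = s * finner A B := by
  simp [finner_expand, Matrix.smul_apply, Finset.mul_sum, mul_assoc]

lemma finner_smul_right {m r : ℕ} (s : ℝ) (A B : Matrix (Fin m) (Fin r) ℝ) :
    finner A (s • B) = s * finner A B := by
  simp only [finner_expand, Matrix.smul_apply, smul_eq_mul, Finset.mul_sum]
  congr 1; ext j; congr 1; ext i; ring

lemma finner_sub_left {m r : ℕ} (A B C : Matrix (Fin m) (Fin r) ℝ) :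
    finner (A - B) C = finner A C - finner B C := by
  simp [finner_expand, sub_mul, Finset.sum_sub_distrib]

lemma finner_sub_right {m r : ℕ} (A B C : Matrix (Fin m) (Fin r) ℝ) :
    finner A (B - C) = finner A B - finner A C := by
  simp [finner_expand, mul_sub, Finset.sum_sub_distrib]

lemma finner_self_nonneg {m r : ℕ} (A : Matrix (Fin m) (Fin r) ℝ) :
    0 ≤ finner A A := by
  rw [finner_expand]
  exact Finset.sum_nonneg fun j _ => Finset.sum_nonneg fun i _ => mul_self_nonneg _

lemma finner_self_eq_zero {m r : ℕ} (A : Matrix (Fin m) (Fin r) ℝ)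
    (hA : finner A A = 0) : A = 0 := by
  rw [finner_expand] at hA
  ext i j
  have h1 := (Finset.sum_eq_zero_iff_of_nonneg (fun j _ => Finset.sum_nonneg fun i _ => mul_self_nonneg (A i j))).mp hA j (Finset.mem_univ j)
  have h2 := (Finset.sum_eq_zero_iff_of_nonneg (fun i _ => mul_self_nonneg (A i j))).mp h1 i (Finset.mem_univ i)
  simpa [mul_self_eq_zero] using h2


theorem stmt10 (m r : ℕ) (c : ℝ) (hc : 0 ≤ c) (lam η : ℝ) (hlam : 0 ≤ lam)
    (hη : 0 < η) (g V : Matrix (Fin m) (Fin r) ℝ)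
    (h : Matrix (Fin m) (Fin r) ℝ → ℝ)
    (hh : ∀ U, h U = (lam / 2) * finner U U + finner g U + (1 / η) * Dpsi c U V)
    (U : Matrix (Fin m) (Fin r) ℝ) :
    (∀ U', h U ≤ h U') ↔
      (lam * η + 6 * finner U U + 2 * c) • U = gradPsi c V - η • g := by
  set W := gradPsi c V with hW
  set a := finner U U with ha
  have hkey : ∀ U', η * (h U' - h U) =
      (lam * η / 2 + c) * (finner U' U' - a) +
      (3/2) * ((finner U' U')^2 - a^2) +
      finner (η • g - W) (U' - U) := by
    intro U'
    rw [hh, hh]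
    unfold Dpsi
    simp only [finner_sub_left, finner_sub_right, finner_smul_left]
    field_simp
    ring
  constructor
  · intro hmin
    have ha0 : 0 ≤ a := finner_self_nonneg U
    obtain ⟨R, hR⟩ : ∃ R, R = (lam * η + 6 * a + 2 * c) • U - (W - η • g) :=
      ⟨_, rfl⟩
    suffices hR0 : R = 0 by
      rw [hR] at hR0
      exact sub_eq_zero.mp hR0
    obtain ⟨p, hp⟩ : ∃ p, p = finner U R := ⟨_, rfl⟩
    obtain ⟨d, hd⟩ : ∃ d, d = finner R R := ⟨_, rfl⟩
    have hd0 : 0 ≤ d := hd ▸ finner_self_nonneg R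
    have hGR : finner (η • g - W) R = d - (lam * η + 6 * a + 2 * c) * p := by
      have hGeq : η • g - W = R - (lam * η + 6 * a + 2 * c) • U := by
        rw [hR]; abel
      rw [hGeq, finner_sub_left, finner_smul_left, ← hp, ← hd]
    have hpoly : ∀ t : ℝ, 0 ≤ t * d
        + t^2 * ((lam * η / 2 + c) * d + 6 * p^2 + 3 * a * d)
        + t^3 * (6 * p * d) + t^4 * ((3/2) * d^2) := by
      intro t
      have h1 : 0 ≤ η * (h (U + t • R) - h U) :=
        mul_nonneg hη.le (sub_nonneg.mpr (hmin _))
      rw [hkey] at h1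
      have hb : finner (U + t • R) (U + t • R) = a + 2 * t * p + t^2 * d := by
        simp only [finner_add_left, finner_add_right, finner_smul_left,
          finner_smul_right]
        rw [finner_comm R U, ← hp, ← hd, ← ha]
        ring
      have hlin : finner (η • g - W) (U + t • R - U)
          = t * (d - (lam * η + 6 * a + 2 * c) * p) := by
        have h2 : U + t • R - U = t • R := by abel
        rw [h2, finner_smul_right, hGR]
      rw [hb, hlin] at h1
      have heq : (lam * η / 2 + c) * ((a + 2 * t * p + t^2 * d) - a)
          + 3/2 * ((a + 2 * t * p + t^2 * d)^2 - a^2)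
          + t * (d - (lam * η + 6 * a + 2 * c) * p)
          = t * d + t^2 * ((lam * η / 2 + c) * d + 6 * p^2 + 3 * a * d)
            + t^3 * (6 * p * d) + t^4 * ((3/2) * d^2) := by ring
      linarith [h1, heq.symm.le, heq.le]
    have hdle : d ≤ 0 := by
      by_contra hcon
      push_neg at hcon
      obtain ⟨C2, hC2⟩ : ∃ x, x = (lam * η / 2 + c) * d + 6 * p^2 + 3 * a * d :=
        ⟨_, rfl⟩
      obtain ⟨C3, hC3⟩ : ∃ x, x = 6 * p * d := ⟨_, rfl⟩
      obtain ⟨C4, hC4⟩ : ∃ x, x = (3/2) * d^2 := ⟨_, rfl⟩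
      obtain ⟨K, hK⟩ : ∃ x, x = |C2| + |C3| + |C4| + 1 := ⟨_, rfl⟩
      have hKpos : 0 < K := by
        rw [hK]; positivity
      obtain ⟨ε, hε⟩ : ∃ x, x = min 1 (d / (2 * K)) := ⟨_, rfl⟩
      have hεpos : 0 < ε := by
        rw [hε]; exact lt_min one_pos (by positivity)
      have hε1 : ε ≤ 1 := hε ▸ min_le_left _ _
      have hεK : ε * K ≤ d / 2 := by
        calc ε * K ≤ (d / (2 * K)) * K :=
              mul_le_mul_of_nonneg_right (hε ▸ min_le_right _ _) hKpos.le
          _ = d / 2 := by field_simp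
      have h1 : ε * d ≤ ε^2 * C2 - ε^3 * C3 + ε^4 * C4 := by
        have hp1 := hpoly (-ε)
        rw [← hC2, ← hC3, ← hC4] at hp1
        have heq : (-ε) * d + (-ε)^2 * C2 + (-ε)^3 * C3 + (-ε)^4 * C4
            = -(ε * d) + ε^2 * C2 - ε^3 * C3 + ε^4 * C4 := by ring
        linarith [hp1, heq.le, heq.symm.le]
      have e2 : ε^2 * C2 ≤ ε^2 * |C2| :=
        mul_le_mul_of_nonneg_left (le_abs_self _) (sq_nonneg _)
      have e3 : -(ε^3 * C3) ≤ ε^3 * |C3| := by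
        have h3 : (0:ℝ) ≤ ε^3 := by positivity
        have := mul_le_mul_of_nonneg_left (neg_le_abs C3) h3
        linarith [this]
      have e4 : ε^4 * C4 ≤ ε^4 * |C4| :=
        mul_le_mul_of_nonneg_left (le_abs_self _) (by positivity)
      have m3 : ε^3 ≤ ε^2 := pow_le_pow_of_le_one hεpos.le hε1 (by norm_num)
      have m4 : ε^4 ≤ ε^2 := pow_le_pow_of_le_one hεpos.le hε1 (by norm_num)
      have e3' : ε^3 * |C3| ≤ ε^2 * |C3| :=
        mul_le_mul_of_nonneg_right m3 (abs_nonneg _)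
      have e4' : ε^4 * |C4| ≤ ε^2 * |C4| :=
        mul_le_mul_of_nonneg_right m4 (abs_nonneg _)
      have hsumK : ε^2 * (|C2| + |C3| + |C4|) ≤ ε^2 * K := by
        apply mul_le_mul_of_nonneg_left _ (sq_nonneg _)
        rw [hK]; linarith
      have hfin : ε * d ≤ ε * (d / 2) := by
        have h5 : ε^2 * K = ε * (ε * K) := by ring
        have h6 : ε * (ε * K) ≤ ε * (d / 2) :=
          mul_le_mul_of_nonneg_left hεK hεpos.le
        have h7 : ε^2 * C2 - ε^3 * C3 + ε^4 * C4
            ≤ ε^2 * (|C2| + |C3| + |C4|) := by linarith [e2, e3, e4, e3', e4']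
        linarith [h1, h7, hsumK, h5.le, h5.symm.le, h6]
      have := le_of_mul_le_mul_left (by linarith [hfin] : ε * d ≤ ε * (d / 2)) hεpos
      linarith
    have hdz : finner R R = 0 := by
      rw [← hd]; linarith
    exact finner_self_eq_zero R hdz
  · intro heq U'
    have hG : η • g - W = -((lam * η + 6 * a + 2 * c) • U) := by
      rw [heq]; abel
    have hk := hkey U'
    rw [hG] at hk
    have hGx : finner (-((lam * η + 6 * a + 2 * c) • U)) (U' - U)
        = -((lam * η + 6 * a + 2 * c) * (finner U U' - a)) := by
      have : -((lam * η + 6 * a + 2 * c) • U) = (-(lam * η + 6 * a + 2 * c)) • U := by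
        module
      rw [this, finner_smul_left, finner_sub_right]
      ring
    rw [hGx] at hk
    have hsum : 0 ≤ a - 2 * finner U U' + finner U' U' := by
      have := finner_self_nonneg (U - U')
      rw [finner_sub_left, finner_sub_right, finner_sub_right,
        finner_comm U' U] at this
      linarith
    have hb : 0 ≤ finner U' U' := finner_self_nonneg U'
    have ha0 : 0 ≤ a := finner_self_nonneg U
    have hnn : 0 ≤ η * (h U' - h U) := by
      rw [hk]
      nlinarith [mul_nonneg (mul_nonneg hlam hη.le) hsum, mul_nonneg hc hsum,
        mul_nonneg ha0 hsum, sq_nonneg (finner U' U' - a)]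
    nlinarith [hη]
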